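/- Let μ be a positive Radon measure on [0,∞) with 0 in its support and such that ∫_0^∞ n₀^{-2σ} dμ(σ) < ∞ for some integer n₀ ≥ 2. Define wₙ = ∫_0^∞ n^{-2σ} dμ(σ) for n ≥ n₀. Then for every ε > 0 there exists c > 0 such that wₙ > c·n^{-ε} for all n ≥ n₀. -/

import Mathlib

open MeasureTheory

/-- The moments `wₙ = ∫ n^{-2σ} dμ(σ)` of a positive Radon measure on `[0,∞)` with
`0` in its support decay more slowly than any negative power of `n`. -/
theorem moments_decay_slowly (μ : Measure ℝ) [μ.Regular] (n₀ : ℕ) (hn₀ : 2 ≤ n₀)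
    (hneg : μ (Set.Iio 0) = 0)
    (hsupp : ∀ ε > (0 : ℝ), 0 < μ (Set.Ico 0 ε))
    (hint : Integrable (fun σ : ℝ => (n₀ : ℝ) ^ (-2 * σ)) μ) :
    ∀ ε > (0 : ℝ), ∃ c > (0 : ℝ), ∀ n : ℕ, n₀ ≤ n →
      c * (n : ℝ) ^ (-ε) < ∫ σ, (n : ℝ) ^ (-2 * σ) ∂μ := by
  intro ε hε
  have hn₀R : (2 : ℝ) ≤ (n₀ : ℝ) := by exact_mod_cast hn₀
  set s : Set ℝ := Set.Ico (0 : ℝ) (ε / 4) with hs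
  have hμs_pos : 0 < μ s := hsupp (ε / 4) (by linarith)
  have hμs_fin : μ s < ⊤ := by
    refine lt_of_le_of_lt (measure_mono (fun σ hσ => ?_))
      (hint.measure_ge_lt_top (ε := (n₀ : ℝ) ^ (-(ε / 2)))
        (Real.rpow_pos_of_pos (by linarith) _))
    obtain ⟨h0, h1⟩ := hσ
    show (n₀ : ℝ) ^ (-(ε / 2)) ≤ (n₀ : ℝ) ^ (-2 * σ)
    exact Real.rpow_le_rpow_of_exponent_le (by linarith) (by linarith)
  set m : ℝ := (μ s).toReal with hm
  have hm_pos : 0 < m := ENNReal.toReal_pos hμs_pos.ne' hμs_fin.ne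
  have hae : ∀ᵐ σ ∂μ, 0 ≤ σ := by
    rw [ae_iff]
    convert hneg using 2
    ext σ; simp [not_le]
  refine ⟨m / 2, by positivity, fun n hn => ?_⟩
  have hnR : (2 : ℝ) ≤ (n : ℝ) := le_trans hn₀R (by exact_mod_cast hn)
  have hn_pos : (0 : ℝ) < n := by linarith
  have hcont : Continuous (fun σ : ℝ => (n : ℝ) ^ (-2 * σ)) :=
    Continuous.rpow continuous_const (by continuity) (fun x => Or.inl (by positivity))
  have hint_n : Integrable (fun σ : ℝ => (n : ℝ) ^ (-2 * σ)) μ := by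
    refine hint.mono' hcont.aestronglyMeasurable ?_
    filter_upwards [hae] with σ hσ
    rw [Real.norm_eq_abs, abs_of_nonneg (Real.rpow_nonneg (by positivity) _)]
    exact Real.rpow_le_rpow_of_nonpos (by linarith) (by exact_mod_cast hn) (by linarith)
  have h1 : ∫ σ in s, (n : ℝ) ^ (-2 * σ) ∂μ ≤ ∫ σ, (n : ℝ) ^ (-2 * σ) ∂μ := by
    refine setIntegral_le_integral hint_n ?_
    filter_upwards with σ
    exact Real.rpow_nonneg (by positivity) _
  have h2 : m * (n : ℝ) ^ (-(ε / 2)) ≤ ∫ σ in s, (n : ℝ) ^ (-2 * σ) ∂μ := by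
    have := setIntegral_mono_on (μ := μ) (s := s)
      (f := fun _ : ℝ => (n : ℝ) ^ (-(ε / 2))) (g := fun σ : ℝ => (n : ℝ) ^ (-2 * σ))
      (integrableOn_const hμs_fin.ne) hint_n.integrableOn measurableSet_Ico
      (fun σ hσ => Real.rpow_le_rpow_of_exponent_le (by linarith)
        (by obtain ⟨h0, h1⟩ := hσ; linarith))
    rwa [setIntegral_const, smul_eq_mul] at this
  have key : m / 2 * (n : ℝ) ^ (-ε) < m * (n : ℝ) ^ (-(ε / 2)) := by
    have heq : (n : ℝ) ^ (-ε) = (n : ℝ) ^ (-(ε / 2)) * (n : ℝ) ^ (-(ε / 2)) := by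
      rw [← Real.rpow_add (by linarith)]; ring_nf
    have ha_pos : 0 < (n : ℝ) ^ (-(ε / 2)) := Real.rpow_pos_of_pos (by linarith) _
    have ha_le : (n : ℝ) ^ (-(ε / 2)) ≤ 1 :=
      Real.rpow_le_one_of_one_le_of_nonpos (by linarith) (by linarith)
    rw [heq]
    nlinarith [mul_pos hm_pos ha_pos,
      mul_le_mul_of_nonneg_left ha_le (mul_pos (half_pos hm_pos) ha_pos).le]
  linarith
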